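/- There exists a constant c > 1 such that for all ε ∈ (0, 1/2), with L(ε) = ⌈log₂(ε^{-2}) + log₂(log₂(ε^{-2}))⌉, N_ℓ(ε) = ⌈(L(ε)+1) · 2^{-ℓ} · max(ℓ,1) · ε^{-2}⌉, and n_ℓ(ε) = ⌈N_ℓ(ε)^{1/2}⌉, one has c^{-1} · ε^{-2} · (ln(ε^{-1}))^{3/2} ≤ ∑_{ℓ=0}^{L(ε)} n_ℓ(ε) · 2^ℓ ≤ c · ε^{-2} · (ln(ε^{-1}))^{3/2}. -/

import Mathlib

/-- Maximal level `L(ε) = ⌈log₂(ε⁻²) + log₂(log₂(ε⁻²))⌉`. -/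
noncomputable def Lfun (ε : ℝ) : ℕ :=
  ⌈Real.logb 2 (ε⁻¹ ^ 2) + Real.logb 2 (Real.logb 2 (ε⁻¹ ^ 2))⌉₊

/-- Replication numbers `N_ℓ(ε) = ⌈(L(ε)+1) · 2^{-ℓ} · max(ℓ,1) · ε⁻²⌉`. -/
noncomputable def Nfun (ε : ℝ) (ℓ : ℕ) : ℕ :=
  ⌈((Lfun ε : ℝ) + 1) * (2 : ℝ)⁻¹ ^ ℓ * (max ℓ 1 : ℕ) * ε⁻¹ ^ 2⌉₊

/-- Square-root replication numbers `n_ℓ(ε) = ⌈N_ℓ(ε)^{1/2}⌉`. -/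
noncomputable def nfun (ε : ℝ) (ℓ : ℕ) : ℕ := ⌈Real.sqrt (Nfun ε ℓ)⌉₊

private lemma sqrt2_lb : (1.4:ℝ) ≤ Real.sqrt 2 := by
  nlinarith [Real.sq_sqrt (show (0:ℝ) ≤ 2 by norm_num), Real.sqrt_nonneg 2]

private lemma sqrt2_ub : Real.sqrt 2 ≤ (1.5:ℝ) := by
  nlinarith [Real.sq_sqrt (show (0:ℝ) ≤ 2 by norm_num), Real.sqrt_nonneg 2]

private lemma sq_cmp {u v : ℝ} (hv : 0 ≤ v) (h : u ^ 2 ≤ v ^ 2) : u ≤ v := by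
  nlinarith

set_option maxHeartbeats 1000000 in
/-- Bit-cost estimate for the random bit multilevel Euler algorithm based on Bakhvalov's
trick: `∑_{ℓ=0}^{L(ε)} n_ℓ(ε)·2^ℓ ≍ ε⁻²·(ln ε⁻¹)^{3/2}`. -/
theorem stmt_9 :
    ∃ c : ℝ, 1 < c ∧ ∀ ε : ℝ, ε ∈ Set.Ioo (0 : ℝ) (1 / 2) →
      c⁻¹ * ε⁻¹ ^ 2 * Real.log ε⁻¹ ^ ((3 : ℝ) / 2) ≤
          ∑ ℓ ∈ Finset.range (Lfun ε + 1), (nfun ε ℓ : ℝ) * 2 ^ ℓ ∧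
        ∑ ℓ ∈ Finset.range (Lfun ε + 1), (nfun ε ℓ : ℝ) * 2 ^ ℓ ≤
          c * ε⁻¹ ^ 2 * Real.log ε⁻¹ ^ ((3 : ℝ) / 2) := by
  refine ⟨200, by norm_num, fun ε hε => ?_⟩
  obtain ⟨hε0, hε2⟩ := hε
  have hx2 : (2:ℝ) < ε⁻¹ := by
    calc (2:ℝ) = (1/2:ℝ)⁻¹ := by norm_num
    _ < ε⁻¹ := by exact inv_strictAnti₀ hε0 hε2
  have hx0 : (0:ℝ) < ε⁻¹ := by positivity
  set x := ε⁻¹ with hxdef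
  set y := Real.log x with hydef
  have hlog2l : (0.6931 : ℝ) < Real.log 2 := by
    have := Real.log_two_gt_d9; linarith
  have hlog2u : Real.log 2 < 0.6932 := by
    have := Real.log_two_lt_d9; linarith
  have hy2 : Real.log 2 < y := Real.log_lt_log two_pos hx2
  have hy0 : 0 < y := by linarith
  set a := Real.logb 2 (x ^ 2) with hadef
  have ha_eq : a * Real.log 2 = 2 * y := by
    rw [hadef, Real.logb, hydef, Real.log_pow]
    field_simp
    push_cast; ring
  have ha2 : 2 < a := by
    have h : 2 * Real.log 2 < a * Real.log 2 := by linarith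
    exact lt_of_mul_lt_mul_right h (by linarith)
  have ha0 : 0 < a := by linarith
  set b := Real.logb 2 a with hbdef
  have hb_eq : b * Real.log 2 = Real.log a := by
    rw [hbdef, Real.logb]; field_simp
  have hb1 : 1 < b := by
    have hla : Real.log 2 < Real.log a := Real.log_lt_log two_pos ha2
    have h : 1 * Real.log 2 < b * Real.log 2 := by linarith
    exact lt_of_mul_lt_mul_right h (by linarith)
  have hb2a : b ≤ 2 * (a - 1) := by
    have h1 : Real.log a ≤ a - 1 := Real.log_le_sub_one_of_pos ha0
    have h5 : b * (1/2) ≤ b * Real.log 2 :=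
      mul_le_mul_of_nonneg_left (by linarith) (by linarith)
    linarith
  set L := Lfun ε with hLdef
  have hLa : a + b ≤ (L:ℝ) := by
    rw [hLdef]; unfold Lfun
    rw [← hxdef, ← hadef, ← hbdef]
    exact Nat.le_ceil _
  have hLb : (L:ℝ) < a + b + 1 := by
    rw [hLdef]; unfold Lfun
    rw [← hxdef, ← hadef, ← hbdef]
    exact Nat.ceil_lt_add_one (by linarith)
  have hL1 : 1 ≤ L := by
    have : (1:ℝ) ≤ (L:ℝ) := by linarith
    exact_mod_cast this
  have hL3a : (L:ℝ) + 1 ≤ 3 * a := by linarith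
  have h2ab : (2:ℝ) ^ (a + b) = x ^ 2 * a := by
    rw [Real.rpow_add two_pos, Real.rpow_logb two_pos (by norm_num) (by positivity),
      Real.rpow_logb two_pos (by norm_num) ha0]
  have h2L : x ^ 2 * a ≤ (2:ℝ) ^ L := by
    rw [← Real.rpow_natCast 2 L, ← h2ab]
    exact (Real.rpow_le_rpow_left_iff one_lt_two).mpr hLa
  have h2L' : (2:ℝ) ^ L ≤ 2 * (x ^ 2 * a) := by
    rw [← Real.rpow_natCast 2 L]
    calc (2:ℝ) ^ (L:ℝ) ≤ (2:ℝ) ^ (a + b + 1) :=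
          (Real.rpow_le_rpow_left_iff one_lt_two).mpr hLb.le
    _ = 2 * (x ^ 2 * a) := by
          rw [Real.rpow_add two_pos, h2ab, Real.rpow_one]; ring
  have hy32 : y ^ ((3:ℝ)/2) = y * Real.sqrt y := by
    rw [Real.sqrt_eq_rpow, show (3:ℝ)/2 = 1 + 1/2 by norm_num,
      Real.rpow_add hy0, Real.rpow_one]
  have hsa : Real.sqrt a ^ 2 = a := Real.sq_sqrt ha0.le
  have hsa1 : 1 ≤ Real.sqrt a := by
    have := Real.sqrt_le_sqrt (show (1:ℝ) ≤ a by linarith)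
    rwa [Real.sqrt_one] at this
  set s := Real.sqrt 2 with hsdef
  have hs2 : s ^ 2 = 2 := Real.sq_sqrt two_pos.le
  have hs0 : 0 < s := Real.sqrt_pos.mpr two_pos
  have hs14 : (1.4:ℝ) ≤ s := sqrt2_lb
  have hs15 : s ≤ (1.5:ℝ) := sqrt2_ub
  have hs1 : (1:ℝ) < s := by linarith
  constructor
  · -- LOWER BOUND
    have hmax : ((max L 1 : ℕ) : ℝ) = (L:ℝ) := by rw [max_eq_left hL1]
    have hinner0 : (0:ℝ) ≤ ((L:ℝ)+1) * (2:ℝ)⁻¹^L * ((max L 1 : ℕ):ℝ) * x^2 := by positivity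
    have hNL : ((L:ℝ)+1) * (2:ℝ)⁻¹^L * ((max L 1:ℕ):ℝ) * x^2 ≤ (Nfun ε L : ℝ) := by
      unfold Nfun
      rw [← hxdef, ← hLdef]
      exact Nat.le_ceil _
    have hsq : Real.sqrt (((L:ℝ)+1) * (2:ℝ)⁻¹^L * ((max L 1:ℕ):ℝ) * x^2) ≤ (nfun ε L : ℝ) := by
      calc Real.sqrt (((L:ℝ)+1) * (2:ℝ)⁻¹^L * ((max L 1:ℕ):ℝ) * x^2)
          ≤ Real.sqrt (Nfun ε L) := Real.sqrt_le_sqrt hNL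
      _ ≤ (nfun ε L : ℝ) := by unfold nfun; exact Nat.le_ceil _
    have hkey : x ^ 2 * (a * Real.sqrt a) ≤
        Real.sqrt (((L:ℝ)+1) * (2:ℝ)⁻¹^L * ((max L 1:ℕ):ℝ) * x^2) * 2 ^ L := by
      apply sq_cmp (by positivity)
      have eR : (Real.sqrt (((L:ℝ)+1) * (2:ℝ)⁻¹^L * ((max L 1:ℕ):ℝ) * x^2) * 2 ^ L)^2
          = ((L:ℝ)+1) * (L:ℝ) * x^2 * (2:ℝ)^L := by
        rw [mul_pow, Real.sq_sqrt hinner0, hmax, inv_pow]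
        field_simp
      have eL : (x ^ 2 * (a * Real.sqrt a))^2 = a*a*(x^2*a)*x^2 := by
        rw [mul_pow, mul_pow, hsa]; ring
      rw [eL, eR]
      have haL : a ≤ (L:ℝ) := by linarith
      have h1 : a * a ≤ ((L:ℝ)+1) * (L:ℝ) :=
        mul_le_mul (by linarith) haL ha0.le (by positivity)
      have h2 : a * a * (x^2*a) ≤ ((L:ℝ)+1)*(L:ℝ) * ((2:ℝ)^L) :=
        mul_le_mul h1 h2L (by positivity) (by positivity)
      linarith [mul_le_mul_of_nonneg_right h2 (sq_nonneg x)]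
    have hterm : x ^ 2 * (a * Real.sqrt a) ≤ (nfun ε L : ℝ) * 2 ^ L :=
      le_trans hkey (mul_le_mul_of_nonneg_right hsq (by positivity))
    have hsum : (nfun ε L : ℝ) * 2 ^ L ≤
        ∑ ℓ ∈ Finset.range (L + 1), (nfun ε ℓ : ℝ) * 2 ^ ℓ :=
      Finset.single_le_sum (f := fun ℓ => (nfun ε ℓ : ℝ) * 2 ^ ℓ)
        (fun i _ => by positivity) (Finset.self_mem_range_succ L)
    have hya : y ≤ a := by
      have h6 : a * Real.log 2 ≤ a * 1 := mul_le_mul_of_nonneg_left (by linarith) ha0.le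
      linarith
    have hyya : y * Real.sqrt y ≤ a * Real.sqrt a :=
      mul_le_mul hya (Real.sqrt_le_sqrt hya) (Real.sqrt_nonneg y) ha0.le
    rw [hy32]
    have hp2 : (0:ℝ) ≤ x^2 * (y * Real.sqrt y) := by positivity
    have hfin : (200:ℝ)⁻¹ * x ^ 2 * (y * Real.sqrt y) ≤ x ^ 2 * (a * Real.sqrt a) := by
      linarith [mul_le_mul_of_nonneg_left hyya (sq_nonneg x)]
    linarith
  · -- UPPER BOUND
    have hss : s * s = 2 := by nlinarith [hs2]
    have hsinv2 : s⁻¹ * 2 = s := by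
      field_simp
      linarith [hss]
    have hterm : ∀ ℓ ∈ Finset.range (L+1),
        (nfun ε ℓ : ℝ) * 2 ^ ℓ ≤ ((L:ℝ)+1)*x*s^ℓ + 2*2^ℓ := by
      intro ℓ hℓ
      have hℓL : ℓ ≤ L := Nat.lt_succ_iff.mp (Finset.mem_range.mp hℓ)
      set inner := ((L:ℝ)+1) * (2:ℝ)⁻¹^ℓ * ((max ℓ 1:ℕ):ℝ) * x^2 with hidef
      have hi0 : (0:ℝ) ≤ inner := by rw [hidef]; positivity
      have hNu : (Nfun ε ℓ : ℝ) < inner + 1 := by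
        rw [hidef]
        unfold Nfun
        rw [← hxdef, ← hLdef]
        exact Nat.ceil_lt_add_one (by positivity)
      have hn : (nfun ε ℓ : ℝ) < Real.sqrt (Nfun ε ℓ) + 1 := by
        unfold nfun; exact Nat.ceil_lt_add_one (Real.sqrt_nonneg _)
      have h1 : Real.sqrt (Nfun ε ℓ) ≤ Real.sqrt (inner + 1) := Real.sqrt_le_sqrt hNu.le
      have h2 : Real.sqrt (inner + 1) ≤ Real.sqrt inner + 1 := by
        apply sq_cmp (by positivity)
        rw [Real.sq_sqrt (by linarith), add_sq, Real.sq_sqrt hi0, one_pow, mul_one]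
        linarith [Real.sqrt_nonneg inner]
      have hm : ((max ℓ 1:ℕ):ℝ) ≤ (L:ℝ)+1 := by
        have h : max ℓ 1 ≤ L + 1 := by omega
        exact_mod_cast h
      have hsp : ((s⁻¹)^ℓ)^2 = ((2:ℝ)⁻¹)^ℓ := by
        rw [← pow_mul, mul_comm ℓ 2, pow_mul, inv_pow, hs2]
      have h3 : Real.sqrt inner ≤ ((L:ℝ)+1)*x*(s⁻¹)^ℓ := by
        apply sq_cmp (by positivity)
        rw [Real.sq_sqrt hi0, mul_pow, mul_pow, hsp, hidef]
        have hpos : (0:ℝ) ≤ ((L:ℝ)+1) * ((2:ℝ)⁻¹)^ℓ * x^2 := by positivity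
        linarith [mul_le_mul_of_nonneg_right hm hpos]
      have h4 : (nfun ε ℓ : ℝ) ≤ ((L:ℝ)+1)*x*(s⁻¹)^ℓ + 2 := by linarith
      calc (nfun ε ℓ : ℝ) * 2 ^ ℓ ≤ (((L:ℝ)+1)*x*(s⁻¹)^ℓ + 2) * 2 ^ ℓ :=
            mul_le_mul_of_nonneg_right h4 (by positivity)
      _ = ((L:ℝ)+1)*x*s^ℓ + 2*2^ℓ := by
            rw [add_mul, mul_assoc, ← mul_pow, hsinv2]
    have hsum1 : ∑ ℓ ∈ Finset.range (L+1), (nfun ε ℓ : ℝ) * 2 ^ ℓ ≤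
        ((L:ℝ)+1)*x*(∑ ℓ ∈ Finset.range (L+1), s^ℓ) +
          2*(∑ ℓ ∈ Finset.range (L+1), (2:ℝ)^ℓ) := by
      rw [Finset.mul_sum, Finset.mul_sum, ← Finset.sum_add_distrib]
      exact Finset.sum_le_sum hterm
    have hg1 : ∑ ℓ ∈ Finset.range (L+1), s^ℓ ≤ 4 * s^L := by
      rw [geom_sum_eq hs1.ne' (L+1)]
      rw [div_le_iff₀ (by linarith : (0:ℝ) < s - 1), pow_succ]
      have hP0 : (0:ℝ) ≤ s^L := by positivity
      linarith [mul_le_mul_of_nonneg_left hs14 hP0]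
    have hg2 : ∑ ℓ ∈ Finset.range (L+1), (2:ℝ)^ℓ ≤ 2 * 2^L := by
      rw [geom_sum_eq (by norm_num : (2:ℝ) ≠ 1) (L+1), pow_succ]
      norm_num
      linarith
    have hsL : s^L ≤ s * (x * Real.sqrt a) := by
      apply sq_cmp (by positivity)
      have e : (s^L)^2 = (2:ℝ)^L := by rw [← pow_mul, mul_comm L 2, pow_mul, hs2]
      rw [e, mul_pow, mul_pow, hs2, hsa]
      linarith
    have hstep1 : ((L:ℝ)+1)*x*(∑ ℓ ∈ Finset.range (L+1), s^ℓ) ≤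
        18 * (x^2 * (a * Real.sqrt a)) := by
      have t1 : ((L:ℝ)+1)*x*(∑ ℓ ∈ Finset.range (L+1), s^ℓ) ≤ ((L:ℝ)+1)*x*(4*s^L) :=
        mul_le_mul_of_nonneg_left hg1 (by positivity)
      have t2 : ((L:ℝ)+1)*x*(4*s^L) ≤ ((L:ℝ)+1)*x*(4*(s*(x*Real.sqrt a))) :=
        mul_le_mul_of_nonneg_left (by linarith) (by positivity)
      have t3 : ((L:ℝ)+1)*x*(4*(s*(x*Real.sqrt a))) ≤ (3*a)*x*(4*(s*(x*Real.sqrt a))) :=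
        mul_le_mul_of_nonneg_right (mul_le_mul_of_nonneg_right hL3a hx0.le) (by positivity)
      have e4 : (3*a)*x*(4*(s*(x*Real.sqrt a))) = 12*s*(x^2 * (a * Real.sqrt a)) := by ring
      have hq : (0:ℝ) ≤ x^2 * (a * Real.sqrt a) := by positivity
      have t5 : 12*s*(x^2 * (a * Real.sqrt a)) ≤ 18*(x^2 * (a * Real.sqrt a)) := by
        linarith [mul_le_mul_of_nonneg_right hs15 hq]
      linarith [t1, t2, e4 ▸ t3, t5]
    have hstep2 : 2*(∑ ℓ ∈ Finset.range (L+1), (2:ℝ)^ℓ) ≤ 8 * (x^2 * (a * Real.sqrt a)) := by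
      have h8 : 2*(2*(2:ℝ)^L) ≤ 8 * (x^2*a) := by linarith
      have hq8 : (0:ℝ) ≤ x^2*a := by positivity
      have h9 : 8 * (x^2*a) ≤ 8 * (x^2 * (a * Real.sqrt a)) := by
        linarith [mul_le_mul_of_nonneg_left hsa1 hq8]
      linarith
    have hya3 : a ≤ 3*y := by
      have h6 : a * (2/3) ≤ a * Real.log 2 :=
        mul_le_mul_of_nonneg_left (by linarith) ha0.le
      linarith
    have hsay : Real.sqrt a ≤ 2 * Real.sqrt y := by
      apply sq_cmp (by positivity)
      rw [hsa, mul_pow, Real.sq_sqrt hy0.le]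
      linarith
    have hfinal : 26 * (x^2 * (a * Real.sqrt a)) ≤ 200 * x^2 * (y * Real.sqrt y) := by
      have haa : a * Real.sqrt a ≤ 6 * (y * Real.sqrt y) := by
        have := mul_le_mul hya3 hsay (Real.sqrt_nonneg a) (by linarith)
        linarith [this]
      have hB : (0:ℝ) ≤ x^2 * (y * Real.sqrt y) := by positivity
      linarith [mul_le_mul_of_nonneg_left haa (sq_nonneg x)]
    rw [hy32]
    calc ∑ ℓ ∈ Finset.range (L+1), (nfun ε ℓ : ℝ) * 2 ^ ℓ
        ≤ 26 * (x^2 * (a * Real.sqrt a)) := by linarith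
    _ ≤ 200 * x^2 * (y * Real.sqrt y) := hfinal
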